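/- Let q = p^m with p > 3 and q ≡ 5 (mod 6). Then the number of b ∈ F_{q^2}^* such that the equation 2u^{q+1} + u^2 = b has exactly 2 solutions u ∈ F_{q^2} is exactly q - 1. -/

import Mathlib

lemma cdt_charP (p m q : ℕ) (hp : p.Prime) (hm : 0 < m) (hq : q = p ^ m)
    (K : Type*) [Field K] [Fintype K] (hK : Fintype.card K = q ^ 2) : CharP K p := by
  haveI := Fact.mk hp
  set r := ringChar K with hr
  haveI : CharP K r := ringChar.charP K
  have hrp : r.Prime := CharP.char_is_prime K r
  obtain ⟨n, hn⟩ := FiniteField.card K r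
  have : r ∣ p := by
    have hdvd : r ∣ p ^ (m * 2) := by
      have : (p ^ m) ^ 2 = r ^ (n : ℕ) := by rw [← hq, ← hK, hn.2]
      rw [← pow_mul] at this
      exact this ▸ dvd_pow_self r (by positivity)
    exact hrp.dvd_of_dvd_pow hdvd
  have : r = p := ((Nat.prime_dvd_prime_iff_eq hrp hp).mp this)
  rw [← this]; infer_instance

lemma cdt_count_roots (K : Type*) [Field K] [Fintype K] [DecidableEq K] {n : ℕ}
    (hn : 0 < n) (hdvd : n ∣ Fintype.card K - 1) :
    (Finset.univ.filter fun x : K => x ^ n = 1).card = n := by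
  obtain ⟨g, hg⟩ := IsCyclic.exists_ofOrder_eq_natCard (α := Kˣ)
  have hcard : orderOf g = Fintype.card K - 1 := by
    rw [hg, Nat.card_eq_fintype_card, Fintype.card_units]
  have hne : orderOf g ≠ 0 := by
    rw [hcard]
    have := Fintype.one_lt_card_iff_nontrivial.mpr (inferInstance : Nontrivial K)
    omega
  have hdvd' : n ∣ orderOf g := hcard ▸ hdvd
  have hord : orderOf (g ^ (orderOf g / n)) = n := orderOf_pow_orderOf_div hne hdvd'
  have hprim : IsPrimitiveRoot ((g ^ (orderOf g / n) : Kˣ) : K) n := by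
    rw [IsPrimitiveRoot.coe_units_iff]
    have h2 := IsPrimitiveRoot.orderOf (g ^ (orderOf g / n))
    rwa [hord] at h2
  have : (Finset.univ.filter fun x : K => x ^ n = 1) = Polynomial.nthRootsFinset n (1 : K) := by
    ext x
    simp [Polynomial.mem_nthRootsFinset hn]
  rw [this, hprim.card_nthRootsFinset]

lemma cdt_s (p m q : ℕ) (hp : p.Prime) (hp3 : 3 < p) (hm : 0 < m) (hq : q = p ^ m)
    (h6 : q % 6 = 5) (K : Type*) [Field K] [Fintype K] (hchar : CharP K p)
    (hK : Fintype.card K = q ^ 2) :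
    ∃ s : K, 3 * s ^ 2 = -1 ∧ s ^ q = -s ∧ s ≠ 0 := by
  classical
  haveI := Fact.mk hp
  have h3 : (3 : K) ≠ 0 := by
    have hnd : ¬ (p ∣ 3) := fun h => by have := Nat.le_of_dvd (by norm_num) h; omega
    have h' : ((3 : ℕ) : K) ≠ 0 := fun h => hnd ((CharP.cast_eq_zero_iff K p 3).mp h)
    exact_mod_cast h'
  have hqodd : Odd q := Nat.odd_iff.mpr (by omega)
  have hfrob : ∀ x y : K, (x + y) ^ q = x ^ q + y ^ q := by
    intro x y; rw [hq]; exact add_pow_char_pow x y p m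
  have h2q : (2 : K) ^ q = 2 := by
    have := hfrob 1 1; norm_num at this; exact this
  have h3q : (3 : K) ^ q = 3 := by
    have := hfrob 2 1; rw [h2q, one_pow] at this; norm_num at this; exact this
  obtain ⟨g, hg⟩ := IsCyclic.exists_ofOrder_eq_natCard (α := Kˣ)
  have hcard : orderOf g = q ^ 2 - 1 := by
    rw [hg, Nat.card_eq_fintype_card, Fintype.card_units, hK]
  have hq5 : 5 ≤ q := by omega
  have hq25 : 25 ≤ q ^ 2 := by nlinarith
  have hne : orderOf g ≠ 0 := by rw [hcard]; omega
  have h6dvd : 6 ∣ orderOf g := by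
    rw [hcard]
    have : q ^ 2 % 6 = 1 := by rw [Nat.pow_mod, h6]
    omega
  set ζu := g ^ (orderOf g / 6) with hζu
  have hord : orderOf ζu = 6 := orderOf_pow_orderOf_div hne h6dvd
  set ζ : K := (ζu : K) with hζ
  have hζ6 : ζ ^ 6 = 1 := by
    have h' := pow_orderOf_eq_one ζu
    rw [hord] at h'
    rw [hζ, ← Units.val_pow_eq_pow_val, h', Units.val_one]
  have hζ3 : ζ ^ 3 ≠ 1 := by
    intro h
    have h' : ζu ^ 3 = 1 := Units.ext (by rw [Units.val_pow_eq_pow_val, Units.val_one]; exact h)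
    have := orderOf_dvd_of_pow_eq_one h'
    rw [hord] at this; omega
  have hζ2 : ζ ^ 2 ≠ 1 := by
    intro h
    have h' : ζu ^ 2 = 1 := Units.ext (by rw [Units.val_pow_eq_pow_val, Units.val_one]; exact h)
    have := orderOf_dvd_of_pow_eq_one h'
    rw [hord] at this; omega
  have hζ3' : ζ ^ 3 = -1 := by
    have hfac : (ζ ^ 3 - 1) * (ζ ^ 3 + 1) = 0 := by linear_combination hζ6
    rcases mul_eq_zero.mp hfac with h | h
    · exact absurd (by linear_combination h) hζ3
    · linear_combination h
  have hz : ζ ^ 2 = ζ - 1 := by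
    have hfac : (ζ + 1) * (ζ ^ 2 - ζ + 1) = 0 := by linear_combination hζ3'
    rcases mul_eq_zero.mp hfac with h | h
    · exfalso
      apply hζ2
      have hζeq : ζ = -1 := by linear_combination h
      rw [hζeq]; ring
    · linear_combination h
  have hzq : ζ ^ q = 1 - ζ := by
    obtain ⟨k, hk⟩ : ∃ k, q = 6 * k + 5 := ⟨q / 6, by omega⟩
    rw [hk, pow_add, pow_mul, hζ6, one_pow, one_mul]
    have h5 : ζ ^ 5 = ζ ^ 3 * ζ ^ 2 := by ring
    rw [h5, hζ3', hz]; ring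
  set s : K := (2 * ζ - 1) / 3 with hs
  have hs1 : 3 * s ^ 2 = -1 := by
    rw [hs]; field_simp
    linear_combination (4 : K) * hz
  have hs2 : s ^ q = -s := by
    rw [hs, div_pow, h3q]
    have hnum : (2 * ζ - 1) ^ q = 2 * ζ ^ q - 1 := by
      have h' := hfrob (2 * ζ) (-1)
      rw [mul_pow, h2q, hqodd.neg_one_pow] at h'
      calc (2 * ζ - 1) ^ q = (2 * ζ + (-1)) ^ q := by ring_nf
        _ = 2 * ζ ^ q + (-1) := h'
        _ = 2 * ζ ^ q - 1 := by ring
    rw [hnum, hzq]; field_simp; ring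
  have hs0 : s ≠ 0 := by
    intro h
    rw [h] at hs1; norm_num at hs1
  exact ⟨s, hs1, hs2, hs0⟩

/-- For p > 3 and q ≡ 5 (mod 6), there are exactly q - 1 elements b ∈ F_{q²}^*
with δ(b) = 2. -/
theorem card_delta_eq_two (p m q : ℕ) (hp : p.Prime) (hodd : Odd p) (hp3 : 3 < p)
    (hm : 0 < m) (hq : q = p ^ m) (h6 : q % 6 = 5)
    (K : Type*) [Field K] [Fintype K] (hK : Fintype.card K = q ^ 2) :
    Nat.card {b : K // b ≠ 0 ∧
      Nat.card {u : K // 2 * u ^ (q + 1) + u ^ 2 = b} = 2} = q - 1 := by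
  classical
  haveI := Fact.mk hp
  haveI hchar : CharP K p := cdt_charP p m q hp hm hq K hK
  obtain ⟨s, hs1, hsQ, hs0⟩ := cdt_s p m q hp hp3 hm hq h6 K hchar hK
  have hq5 : 5 ≤ q := by omega
  have hqodd : Odd q := Nat.odd_iff.mpr (by omega)
  have hqe : Even (q + 1) := Odd.add_one hqodd
  have h3 : (3 : K) ≠ 0 := by
    have hnd : ¬ (p ∣ 3) := fun h => by have := Nat.le_of_dvd (by norm_num) h; omega
    have h' : ((3 : ℕ) : K) ≠ 0 := fun h => hnd ((CharP.cast_eq_zero_iff K p 3).mp h)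
    exact_mod_cast h'
  have h2 : (2 : K) ≠ 0 := by
    have hnd : ¬ (p ∣ 2) := fun h => by have := Nat.le_of_dvd (by norm_num) h; omega
    have h' : ((2 : ℕ) : K) ≠ 0 := fun h => hnd ((CharP.cast_eq_zero_iff K p 2).mp h)
    exact_mod_cast h'
  have hfrob : ∀ x y : K, (x + y) ^ q = x ^ q + y ^ q := by
    intro x y; rw [hq]; exact add_pow_char_pow x y p m
  have h2q : (2 : K) ^ q = 2 := by
    have := hfrob 1 1; norm_num at this; exact this
  have hxqq : ∀ x : K, (x ^ q) ^ q = x := by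
    intro x
    rw [← pow_mul]
    have hcc : q * q = Fintype.card K := by rw [hK]; ring
    rw [hcc, FiniteField.pow_card]
  have hpowq : ∀ u : K, (u ^ (q + 1)) ^ q = u ^ (q + 1) := by
    intro u
    rw [pow_right_comm, pow_succ, hxqq, pow_succ]
    ring
  -- Frobenius of f
  have hfq : ∀ u : K, (2 * u ^ (q + 1) + u ^ 2) ^ q = 2 * u ^ (q + 1) + (u ^ q) ^ 2 := by
    intro u
    rw [hfrob, mul_pow, h2q, hpowq, pow_right_comm]
  have hfneg : ∀ u : K, 2 * (-u) ^ (q + 1) + (-u) ^ 2 = 2 * u ^ (q + 1) + u ^ 2 := by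
    intro u
    rw [hqe.neg_pow, neg_sq]
  -- L1 : any solution w of f w = b satisfies the quadratic identity
  have hL1 : ∀ w b : K, 2 * w ^ (q + 1) + w ^ 2 = b →
      3 * (w ^ 2) ^ 2 + (4 * b ^ q - 2 * b) * w ^ 2 - b ^ 2 = 0 := by
    intro w b hb
    subst hb
    rw [hfq w, pow_succ w q]
    generalize w ^ q = c
    ring
  -- L2 : if u ∈ U then f u ≠ 0 and solutions are exactly ±u
  have hL2 : ∀ u : K, u ≠ 0 → u ^ 2 + u ^ q * u + (u ^ q) ^ 2 = 0 →
      (2 * u ^ (q + 1) + u ^ 2 ≠ 0 ∧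
        ∀ w : K, 2 * w ^ (q + 1) + w ^ 2 = 2 * u ^ (q + 1) + u ^ 2 → w = u ∨ w = -u) := by
    intro u hu hU
    have hfu : 2 * u ^ (q + 1) + u ^ 2 = 2 * (u ^ q * u) + u ^ 2 := by rw [pow_succ]
    have hfuq : (2 * u ^ (q + 1) + u ^ 2) ^ q = 2 * (u ^ q * u) + (u ^ q) ^ 2 := by
      rw [hfq u, pow_succ]
    have hb2 : (2 * u ^ (q + 1) + u ^ 2) ^ 2 = -3 * (u ^ 2) ^ 2 := by
      rw [hfu]; linear_combination (4 * u ^ 2) * hU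
    have hbne : 2 * u ^ (q + 1) + u ^ 2 ≠ 0 := by
      intro h
      rw [h] at hb2
      have h30 : (3 : K) * (u ^ 2) ^ 2 = 0 := by linear_combination hb2
      rcases mul_eq_zero.mp h30 with h' | h'
      · exact h3 h'
      · exact hu (sq_eq_zero_iff.mp (sq_eq_zero_iff.mp h'))
    refine ⟨hbne, fun w hw => ?_⟩
    have h1 := hL1 w _ hw
    have hb1 : 4 * (2 * u ^ (q + 1) + u ^ 2) ^ q - 2 * (2 * u ^ (q + 1) + u ^ 2)
        = -6 * u ^ 2 := by
      rw [hfuq, hfu]; linear_combination 4 * hU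
    have hsq3 : 3 * (w ^ 2 - u ^ 2) ^ 2 = 0 := by
      linear_combination h1 - w ^ 2 * hb1 + hb2
    have hsq0 : (w ^ 2 - u ^ 2) ^ 2 = 0 := by
      rcases mul_eq_zero.mp hsq3 with h' | h'
      · exact absurd h' h3
      · exact h'
    have hww : w ^ 2 = u ^ 2 := by
      have := sq_eq_zero_iff.mp hsq0
      linear_combination this
    have hfac : (w - u) * (w + u) = 0 := by linear_combination hww
    rcases mul_eq_zero.mp hfac with h' | h'
    · left; linear_combination h'
    · right; linear_combination h'
  -- s facts
  have hs2' : s ^ 2 = -1 / 3 := by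
    field_simp
    linear_combination hs1
  -- L4 : v = s*b/u is also a solution
  have hL4 : ∀ u : K, u ≠ 0 →
      2 * (s * (2 * u ^ (q + 1) + u ^ 2) / u) ^ (q + 1)
        + (s * (2 * u ^ (q + 1) + u ^ 2) / u) ^ 2 = 2 * u ^ (q + 1) + u ^ 2 := by
    intro u hu
    have hcne : u ^ q ≠ 0 := pow_ne_zero q hu
    set b := 2 * u ^ (q + 1) + u ^ 2 with hbdef
    have hb : b = 2 * (u ^ q * u) + u ^ 2 := by rw [hbdef, pow_succ]
    have hbq : b ^ q = 2 * (u ^ q * u) + (u ^ q) ^ 2 := by rw [hbdef, hfq u, pow_succ]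
    have hvq : (s * b / u) ^ q = -s * b ^ q / u ^ q := by
      rw [div_pow, mul_pow, hsQ]
    rw [pow_succ, hvq]
    have hA : -s * b ^ q / u ^ q * (s * b / u) = -(s ^ 2) * (b ^ q * b) / (u ^ q * u) := by
      ring
    rw [hA, hs2']
    have hB : (s * b / u) ^ 2 = s ^ 2 * b ^ 2 / u ^ 2 := by ring
    rw [hB, hs2']
    rw [hbq, hb]
    field_simp
    ring
  -- square of v
  have hv2 : ∀ u b : K, u ≠ 0 → (s * b / u) ^ 2 = -(b ^ 2) / (3 * u ^ 2) := by
    intro u b hu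
    field_simp
    linear_combination b ^ 2 * hs1
  -- the finsets
  set Ufin : Finset K :=
    Finset.univ.filter (fun u : K => u ≠ 0 ∧ u ^ 2 + u ^ q * u + (u ^ q) ^ 2 = 0) with hUfin
  -- u ∈ Ufin → -u ∈ Ufin
  have hUneg : ∀ u : K, u ∈ Ufin → -u ∈ Ufin := by
    intro u hu
    rw [hUfin, Finset.mem_filter] at hu ⊢
    obtain ⟨-, hu0, hue⟩ := hu
    refine ⟨Finset.mem_univ _, neg_ne_zero.mpr hu0, ?_⟩
    rw [hqodd.neg_pow]
    linear_combination hue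
  -- claim 1 : u ∈ Ufin → f u ≠ 0 and solution filter = {u, -u}
  have hClaim1 : ∀ u : K, u ∈ Ufin →
      (2 * u ^ (q + 1) + u ^ 2 ≠ 0 ∧
        (Finset.univ.filter fun w : K => 2 * w ^ (q + 1) + w ^ 2
          = 2 * u ^ (q + 1) + u ^ 2) = {u, -u}) := by
    intro u hu
    rw [hUfin, Finset.mem_filter] at hu
    obtain ⟨-, hu0, hue⟩ := hu
    obtain ⟨hne, huniq⟩ := hL2 u hu0 hue
    refine ⟨hne, ?_⟩
    ext w
    simp only [Finset.mem_filter, Finset.mem_univ, true_and, Finset.mem_insert,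
      Finset.mem_singleton]
    constructor
    · exact huniq w
    · rintro (rfl | rfl)
      · rfl
      · exact hfneg u
  have huneu : ∀ u : K, u ≠ 0 → u ≠ -u := by
    intro u hu0 h
    apply hu0
    have h20 : (2 : K) * u = 0 := by linear_combination h
    rcases mul_eq_zero.mp h20 with h' | h'
    · exact absurd h' h2
    · exact h'
  -- claim 2 : converse
  have hClaim2 : ∀ b : K, b ≠ 0 →
      (Finset.univ.filter fun w : K => 2 * w ^ (q + 1) + w ^ 2 = b).card = 2 →
      ∃ u ∈ Ufin, 2 * u ^ (q + 1) + u ^ 2 = b := by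
    intro b hb0 hcard2
    have hpos : 0 < (Finset.univ.filter fun w : K => 2 * w ^ (q + 1) + w ^ 2 = b).card := by
      omega
    obtain ⟨u, hu⟩ := Finset.card_pos.mp hpos
    rw [Finset.mem_filter] at hu
    have hub : 2 * u ^ (q + 1) + u ^ 2 = b := hu.2
    have hu0 : u ≠ 0 := by
      intro h
      rw [h] at hub
      apply hb0
      rw [← hub]
      rw [zero_pow (by omega : q + 1 ≠ 0), zero_pow (by norm_num : (2:ℕ) ≠ 0)]
      ring
    by_cases hUe : u ^ 2 + u ^ q * u + (u ^ q) ^ 2 = 0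
    · exact ⟨u, by rw [hUfin]; simp [hu0, hUe], hub⟩
    · exfalso
      -- the extra solution v
      set v : K := s * b / u with hvdef
      have hvsol : 2 * v ^ (q + 1) + v ^ 2 = b := by
        rw [hvdef, ← hub]
        exact hL4 u hu0
      have hv0 : v ≠ 0 := by
        rw [hvdef]
        exact div_ne_zero (mul_ne_zero hs0 hb0) hu0
      have hv2u2 : v ^ 2 ≠ u ^ 2 := by
        intro hveq
        apply hUe
        have hX : b ^ 2 = -3 * (u ^ 2) ^ 2 := by
          have := hv2 u b hu0
          rw [hvdef] at hveq
          rw [hveq] at this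
          field_simp at this
          linear_combination this
        have hb' : 2 * (u ^ q * u) + u ^ 2 = b := by rw [← hub, pow_succ u q]
        rw [← hb'] at hX
        have h4 : (4 : K) * u ^ 2 * (u ^ 2 + u ^ q * u + (u ^ q) ^ 2) = 0 := by
          linear_combination hX
        have hu2 : (4 : K) * u ^ 2 ≠ 0 := by
          apply mul_ne_zero _ (pow_ne_zero 2 hu0)
          intro h4'
          apply h2
          have : (2 : K) * 2 = 0 := by linear_combination h4'
          rcases mul_eq_zero.mp this with h' | h' <;> exact h'
        rcases mul_eq_zero.mp h4 with h' | h'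
        · exact absurd h' hu2
        · exact h'
      have hvne1 : v ≠ u := fun h => hv2u2 (by rw [h])
      have hvne2 : v ≠ -u := fun h => hv2u2 (by rw [h]; ring)
      have hsub : ({u, -u, v} : Finset K) ⊆
          Finset.univ.filter fun w : K => 2 * w ^ (q + 1) + w ^ 2 = b := by
        intro x hx
        simp only [Finset.mem_insert, Finset.mem_singleton] at hx
        rw [Finset.mem_filter]
        rcases hx with rfl | rfl | rfl
        · exact ⟨Finset.mem_univ _, hub⟩
        · exact ⟨Finset.mem_univ _, by rw [hfneg]; exact hub⟩
        · exact ⟨Finset.mem_univ _, hvsol⟩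
      have hcard3 : ({u, -u, v} : Finset K).card = 3 := by
        rw [Finset.card_insert_of_notMem, Finset.card_insert_of_notMem,
          Finset.card_singleton]
        · simp only [Finset.mem_singleton]
          exact fun h => hvne2 (by rw [h])
        · simp only [Finset.mem_insert, Finset.mem_singleton]
          push_neg
          exact ⟨huneu u hu0, fun h => hvne1 (by rw [h])⟩
      have := Finset.card_le_card hsub
      omega
  -- counting Ufin
  obtain ⟨k, hk⟩ : ∃ k, q = 6 * k + 5 := ⟨q / 6, by omega⟩
  have hcardK1 : Fintype.card K - 1 = q ^ 2 - 1 := by rw [hK]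
  have hdvd1 : (q - 1) ∣ Fintype.card K - 1 := by
    rw [hcardK1]
    refine ⟨q + 1, ?_⟩
    obtain ⟨j, hj⟩ : ∃ j, q = j + 1 := ⟨q - 1, by omega⟩
    apply Nat.sub_eq_of_eq_add
    rw [hj]
    simp only [Nat.add_sub_cancel]
    ring
  have hdvd3 : 3 * (q - 1) ∣ Fintype.card K - 1 := by
    rw [hcardK1]
    refine ⟨2 * (k + 1), ?_⟩
    apply Nat.sub_eq_of_eq_add
    rw [show q - 1 = 6 * k + 4 from by omega, hk]
    ring
  have hcardA : (Finset.univ.filter fun x : K => x ^ (3 * (q - 1)) = 1).card = 3 * (q - 1) :=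
    cdt_count_roots K (by omega) hdvd3
  have hcardB : (Finset.univ.filter fun x : K => x ^ (q - 1) = 1).card = q - 1 :=
    cdt_count_roots K (by omega) hdvd1
  have hBA : (Finset.univ.filter fun x : K => x ^ (q - 1) = 1) ⊆
      (Finset.univ.filter fun x : K => x ^ (3 * (q - 1)) = 1) := by
    intro x hx
    rw [Finset.mem_filter] at hx ⊢
    refine ⟨Finset.mem_univ _, ?_⟩
    rw [mul_comm, pow_mul, hx.2, one_pow]
  have hUsdiff : Ufin = (Finset.univ.filter fun x : K => x ^ (3 * (q - 1)) = 1)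
      \ (Finset.univ.filter fun x : K => x ^ (q - 1) = 1) := by
    rw [hUfin]
    ext x
    simp only [Finset.mem_filter, Finset.mem_univ, true_and, Finset.mem_sdiff]
    constructor
    · rintro ⟨hx0, hxe⟩
      have hxq : x ^ q = x ^ (q - 1) * x := by
        rw [← pow_succ]
        congr 1
        omega
      have hT : 1 + x ^ (q - 1) + (x ^ (q - 1)) ^ 2 = 0 := by
        have hfac : x ^ 2 * (1 + x ^ (q - 1) + (x ^ (q - 1)) ^ 2) = 0 := by
          rw [← hxe, hxq]; ring
        rcases mul_eq_zero.mp hfac with h' | h'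
        · exact absurd h' (pow_ne_zero 2 hx0)
        · exact h'
      constructor
      · rw [mul_comm, pow_mul]
        linear_combination (x ^ (q - 1) - 1) * hT
      · intro h1
        rw [h1] at hT
        apply h3
        linear_combination hT
    · rintro ⟨hx3, hx1⟩
      have hx0 : x ≠ 0 := by
        intro h
        rw [h, zero_pow (by omega : 3 * (q - 1) ≠ 0)] at hx3
        exact one_ne_zero hx3.symm
      have ht3 : (x ^ (q - 1)) ^ 3 = 1 := by
        rw [← pow_mul, mul_comm]
        exact hx3
      have hT : 1 + x ^ (q - 1) + (x ^ (q - 1)) ^ 2 = 0 := by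
        have hfac : (x ^ (q - 1) - 1) * (1 + x ^ (q - 1) + (x ^ (q - 1)) ^ 2) = 0 := by
          linear_combination ht3
        rcases mul_eq_zero.mp hfac with h' | h'
        · exact absurd (by linear_combination h') hx1
        · exact h'
      refine ⟨hx0, ?_⟩
      have hxq : x ^ q = x ^ (q - 1) * x := by
        rw [← pow_succ]
        congr 1
        omega
      rw [hxq]
      have : x ^ 2 + x ^ (q - 1) * x * x + (x ^ (q - 1) * x) ^ 2
          = x ^ 2 * (1 + x ^ (q - 1) + (x ^ (q - 1)) ^ 2) := by ring
      rw [this, hT, mul_zero]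
  have hUcard : Ufin.card = 2 * (q - 1) := by
    rw [hUsdiff, Finset.card_sdiff_of_subset hBA, hcardA, hcardB]
    omega
  -- the image
  have hfib : ∀ b ∈ Ufin.image (fun u : K => 2 * u ^ (q + 1) + u ^ 2),
      (Ufin.filter fun a : K => 2 * a ^ (q + 1) + a ^ 2 = b).card = 2 := by
    intro b hb
    rw [Finset.mem_image] at hb
    obtain ⟨u, huU, hub⟩ := hb
    have hu0 : u ≠ 0 := by
      rw [hUfin, Finset.mem_filter] at huU
      exact huU.2.1
    have hfilter : (Ufin.filter fun a : K => 2 * a ^ (q + 1) + a ^ 2 = b) = {u, -u} := by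
      obtain ⟨hne, hset⟩ := hClaim1 u huU
      ext a
      simp only [Finset.mem_filter, Finset.mem_insert, Finset.mem_singleton]
      constructor
      · rintro ⟨haU, hab⟩
        have : a ∈ Finset.univ.filter fun w : K => 2 * w ^ (q + 1) + w ^ 2
            = 2 * u ^ (q + 1) + u ^ 2 := by
          rw [Finset.mem_filter]
          exact ⟨Finset.mem_univ _, by rw [hab, ← hub]⟩
        rw [hset] at this
        simpa using this
      · rintro (rfl | rfl)
        · exact ⟨huU, hub⟩
        · exact ⟨hUneg u huU, by rw [hfneg]; exact hub⟩
    rw [hfilter]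
    rw [Finset.card_insert_of_notMem, Finset.card_singleton]
    simp only [Finset.mem_singleton]
    exact huneu u hu0
  have himg := Finset.card_eq_sum_card_image (fun u : K => 2 * u ^ (q + 1) + u ^ 2) Ufin
  rw [Finset.sum_congr rfl hfib] at himg
  rw [Finset.sum_const, smul_eq_mul] at himg
  -- Sfin
  have hSfin : (Finset.univ.filter fun b : K => b ≠ 0 ∧
      (Finset.univ.filter fun w : K => 2 * w ^ (q + 1) + w ^ 2 = b).card = 2)
      = Ufin.image (fun u : K => 2 * u ^ (q + 1) + u ^ 2) := by
    ext b
    simp only [Finset.mem_filter, Finset.mem_univ, true_and, Finset.mem_image]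
    constructor
    · rintro ⟨hb0, hbcard⟩
      exact hClaim2 b hb0 hbcard
    · rintro ⟨u, huU, rfl⟩
      obtain ⟨hne, hset⟩ := hClaim1 u huU
      refine ⟨hne, ?_⟩
      rw [hset]
      rw [Finset.card_insert_of_notMem, Finset.card_singleton]
      simp only [Finset.mem_singleton]
      apply huneu
      rw [hUfin, Finset.mem_filter] at huU
      exact huU.2.1
  -- final assembly
  have hmain : (Finset.univ.filter fun b : K => b ≠ 0 ∧
      (Finset.univ.filter fun w : K => 2 * w ^ (q + 1) + w ^ 2 = b).card = 2).card = q - 1 := by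
    rw [hSfin]
    omega
  have hinner : ∀ b : K, Nat.card {u : K // 2 * u ^ (q + 1) + u ^ 2 = b}
      = (Finset.univ.filter fun w : K => 2 * w ^ (q + 1) + w ^ 2 = b).card := by
    intro b
    rw [Nat.card_eq_fintype_card, Fintype.card_subtype]
  rw [Nat.card_eq_fintype_card, Fintype.card_subtype]
  simp only [hinner]
  exact hmain
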